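/- Let G be a finite group, α : G × G → ℂˣ a 2-cocycle such that the twisted group algebra ℂ^αG is a simple ring, and let N ⊴ G be a normal subgroup such that the restriction of the cohomology class of α to N is trivial, i.e. there exists β : N → ℂˣ with α(n,n') = β(n)·β(n')·β(nn')⁻¹ for all n, n' ∈ N. Then every simple ℂ^αN-module is 1-dimensional, and N is abelian. -/

import Mathlib

/-- A 2-cocycle on `G` with values in `ℂˣ`. -/
def IsTwoCocycle {G : Type} [Group G] (α : G → G → ℂˣ) : Prop :=
  ∀ g h k : G, α g h * α (g * h) k = α h k * α g (h * k)

/-- A twisted group algebra `ℂ^αG`: a ℂ-algebra with a basis `u_g` of invertible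
elements satisfying `u_g * u_h = α g h • u_{gh}`. -/
structure TwistedGroupAlgebra (G : Type) [Group G] (α : G → G → ℂˣ) where
  carrier : Type
  [ringStr : Ring carrier]
  [algStr : Algebra ℂ carrier]
  u : G → carrierˣ
  basis : Module.Basis G ℂ carrier
  basis_eq : ∀ g : G, basis g = (u g : carrier)
  u_mul : ∀ g h : G, (u g : carrier) * (u h : carrier) = (α g h : ℂ) • (u (g * h) : carrier)

attribute [instance] TwistedGroupAlgebra.ringStr TwistedGroupAlgebra.algStr

namespace TwistedGroupAlgebra

variable {G : Type} [Group G] {α : G → G → ℂˣ}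

/-- The subalgebra `ℂ^αN ⊆ ℂ^αG` spanned by the `u_n`, `n ∈ N`. -/
def sub (A : TwistedGroupAlgebra G α) (N : Subgroup G) : Subalgebra ℂ A.carrier :=
  Algebra.adjoin ℂ ((fun g : G => (A.u g : A.carrier)) '' (N : Set G))

/-- The dimension over `ℂ` of a `ℂ^αN`-module. -/
noncomputable def dimC (A : TwistedGroupAlgebra G α) (N : Subgroup G) (M : Type)
    [AddCommGroup M] [Module (A.sub N) M] : ℕ :=
  Module.finrank ℂ (RestrictScalars ℂ (A.sub N) M)

/-- `TwistIso A N g M M'` says that `M'` is isomorphic to the twist `{}^{g}M` of the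
`ℂ^αN`-module `M`, i.e. there is an additive bijection `e : M' → M` with
`e (a • m') = (u_g⁻¹ a u_g) • e m'` for all `a ∈ ℂ^αN`. -/
def TwistIso (A : TwistedGroupAlgebra G α) (N : Subgroup G) (g : G)
    (M M' : Type) [AddCommGroup M] [Module (A.sub N) M]
    [AddCommGroup M'] [Module (A.sub N) M'] : Prop :=
  ∃ e : M' ≃+ M, ∀ (a : A.sub N) (m' : M')
    (h : (((A.u g)⁻¹ : A.carrierˣ) : A.carrier) * (a : A.carrier) * (A.u g : A.carrier) ∈
      A.sub N),
    e (a • m') =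
      (⟨(((A.u g)⁻¹ : A.carrierˣ) : A.carrier) * (a : A.carrier) * (A.u g : A.carrier), h⟩ :
        A.sub N) • e m'

/-- The action of `G/N` on isomorphism classes of simple `ℂ^αN`-modules is transitive. -/
def TransAction (A : TwistedGroupAlgebra G α) (N : Subgroup G) : Prop :=
  ∀ (M : Type) [AddCommGroup M] [Module (A.sub N) M]
    (M' : Type) [AddCommGroup M'] [Module (A.sub N) M'],
    IsSimpleModule (A.sub N) M → IsSimpleModule (A.sub N) M' →
    ∃ g : G, TwistIso A N g M M'

/-- The action of `G/N` on isomorphism classes of simple `ℂ^αN`-modules is free. -/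
def FreeAction (A : TwistedGroupAlgebra G α) (N : Subgroup G) : Prop :=
  ∀ (M : Type) [AddCommGroup M] [Module (A.sub N) M], IsSimpleModule (A.sub N) M →
    ∀ g : G, TwistIso A N g M M → g ∈ N

/-- The restriction of the cohomology class of `α` to the subgroup `N` is trivial. -/
def RestTrivial (α : G → G → ℂˣ) (N : Subgroup G) : Prop :=
  ∃ β : N → ℂˣ, ∀ n n' : N, α n n' = β n * β n' * (β (n * n'))⁻¹

end TwistedGroupAlgebra

namespace Stmt7Aux
open TwistedGroupAlgebra

variable {G : Type} [Group G] {α : G → G → ℂˣ} (A : TwistedGroupAlgebra G α)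
  {N : Subgroup G} (β : ↥N → ℂˣ)

lemma u_mem {n : G} (hn : n ∈ N) : (A.u n : A.carrier) ∈ A.sub N :=
  Algebra.subset_adjoin ⟨n, hn, rfl⟩

lemma u_one_eq : (A.u 1 : A.carrier) = ((α 1 1 : ℂˣ) : ℂ) • (1 : A.carrier) := by
  have h := A.u_mul 1 1
  rw [one_mul] at h
  have h2 : ((A.u 1 : A.carrier) * A.u 1) * ↑(A.u 1)⁻¹
      = ((α 1 1 : ℂ) • (A.u 1 : A.carrier)) * ↑(A.u 1)⁻¹ := by rw [h]
  rwa [mul_assoc, Units.mul_inv, mul_one, smul_mul_assoc, Units.mul_inv] at h2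

noncomputable def v (n : ↥N) : A.carrier := (((β n)⁻¹ : ℂˣ) : ℂ) • (A.u ↑n : A.carrier)

lemma v_mem (n : ↥N) : v A β n ∈ A.sub N :=
  Subalgebra.smul_mem _ (u_mem A n.2) _

lemma v_mul (hβ : ∀ n n' : ↥N, α ↑n ↑n' = β n * β n' * (β (n * n'))⁻¹) (n m : ↥N) :
    v A β n * v A β m = v A β (n * m) := by
  unfold v
  rw [smul_mul_assoc, mul_smul_comm, A.u_mul, smul_smul, smul_smul]
  have hcoe : ((n : G) * (m : G)) = ((n * m : ↥N) : G) := rfl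
  rw [hcoe]
  congr 1
  have h1 : (α (n : G) (m : G) : ℂ) = (β n : ℂ) * (β m : ℂ) * ((β (n * m) : ℂ))⁻¹ := by
    rw [hβ n m]; simp [Units.val_mul, Units.val_inv_eq_inv_val]
  rw [h1]
  simp only [Units.val_inv_eq_inv_val]
  field_simp

lemma v_one (hβ : ∀ n n' : ↥N, α ↑n ↑n' = β n * β n' * (β (n * n'))⁻¹) :
    v A β 1 = 1 := by
  unfold v
  have h1 : ((1 : ↥N) : G) = (1 : G) := rfl
  rw [h1, u_one_eq]
  have h2 : (α (1:G) (1:G)) = β 1 := by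
    have := hβ 1 1
    rw [one_mul] at this
    simpa [mul_assoc] using this
  rw [smul_smul]
  have : (((β 1)⁻¹ : ℂˣ) : ℂ) * ((α (1:G) (1:G) : ℂˣ) : ℂ) = 1 := by
    rw [h2]; simp [Units.val_inv_eq_inv_val]
  rw [this, one_smul]


variable [Fintype ↥N]
variable (hβ : ∀ n n' : ↥N, α ↑n ↑n' = β n * β n' * (β (n * n'))⁻¹)

noncomputable def e0 : A.carrier :=
  ((Fintype.card ↥N : ℂ))⁻¹ • ∑ n : ↥N, v A β n

lemma e0_mem : e0 A β ∈ A.sub N :=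
  Subalgebra.smul_mem _ (sum_mem fun n _ => v_mem A β n) _

lemma cardN_ne_zero : ((Fintype.card ↥N : ℂ)) ≠ 0 := by
  exact_mod_cast Fintype.card_ne_zero

include hβ in
lemma v_mul_e0 (n : ↥N) : v A β n * e0 A β = e0 A β := by
  unfold e0
  rw [mul_smul_comm, Finset.mul_sum]
  congr 1
  calc ∑ m : ↥N, v A β n * v A β m = ∑ m : ↥N, v A β (n * m) := by
        refine Finset.sum_congr rfl fun m _ => v_mul A β hβ n m
    _ = ∑ m : ↥N, v A β m := Equiv.sum_comp (Equiv.mulLeft n) (v A β)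

include hβ in
lemma e0_mul_v (n : ↥N) : e0 A β * v A β n = e0 A β := by
  unfold e0
  rw [smul_mul_assoc, Finset.sum_mul]
  congr 1
  calc ∑ m : ↥N, v A β m * v A β n = ∑ m : ↥N, v A β (m * n) := by
        refine Finset.sum_congr rfl fun m _ => v_mul A β hβ m n
    _ = ∑ m : ↥N, v A β m := Equiv.sum_comp (Equiv.mulRight n) (v A β)

include hβ in
lemma e0_idem : e0 A β * e0 A β = e0 A β := by
  have h1 : (∑ n : ↥N, v A β n) * e0 A β = (Fintype.card ↥N : ℂ) • e0 A β := by
    rw [Finset.sum_mul, Finset.sum_congr rfl fun n _ => v_mul_e0 A β hβ n]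
    simp [Finset.sum_const, Finset.card_univ, Nat.cast_smul_eq_nsmul]
  nth_rewrite 1 [e0]
  rw [smul_mul_assoc, h1, smul_smul, inv_mul_cancel₀ (cardN_ne_zero (N := N)), one_smul]

include hβ in
lemma u_mul_e0 (n : ↥N) : (A.u ↑n : A.carrier) * e0 A β = ((β n : ℂˣ) : ℂ) • e0 A β := by
  have h : (A.u ↑n : A.carrier) = ((β n : ℂˣ) : ℂ) • v A β n := by
    unfold v; rw [smul_smul]; simp [Units.val_inv_eq_inv_val]
  rw [h, smul_mul_assoc, v_mul_e0 A β hβ]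

include hβ in
lemma e0_mul_u (n : ↥N) : e0 A β * (A.u ↑n : A.carrier) = ((β n : ℂˣ) : ℂ) • e0 A β := by
  have h : (A.u ↑n : A.carrier) = ((β n : ℂˣ) : ℂ) • v A β n := by
    unfold v; rw [smul_smul]; simp [Units.val_inv_eq_inv_val]
  rw [h, mul_smul_comm, e0_mul_v A β hβ]

include hβ in
lemma e0_central : ∀ x ∈ A.sub N, e0 A β * x = x * e0 A β := by
  intro x hx
  induction hx using Algebra.adjoin_induction with
  | mem y hy =>
      obtain ⟨n, hn, rfl⟩ := hy
      show e0 A β * (A.u n : A.carrier) = (A.u n : A.carrier) * e0 A β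
      exact (e0_mul_u A β hβ ⟨n, hn⟩).trans (u_mul_e0 A β hβ ⟨n, hn⟩).symm
  | algebraMap c => rw [← Algebra.commutes]
  | add x y hx hy ihx ihy => rw [mul_add, add_mul, ihx, ihy]
  | mul x y hx hy ihx ihy => rw [← mul_assoc, ihx, mul_assoc, ihy, mul_assoc]

include hβ in
lemma e0_scalar : ∀ x ∈ A.sub N, ∃ c : ℂ, e0 A β * x * e0 A β = c • e0 A β := by
  intro x hx
  induction hx using Algebra.adjoin_induction with
  | mem y hy =>
      obtain ⟨n, hn, rfl⟩ := hy
      refine ⟨β ⟨n, hn⟩, ?_⟩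
      show e0 A β * (A.u n : A.carrier) * e0 A β = _
      rw [e0_mul_u A β hβ ⟨n, hn⟩, smul_mul_assoc, e0_idem A β hβ]
  | algebraMap c =>
      refine ⟨c, ?_⟩
      rw [← Algebra.commutes, mul_assoc, e0_idem A β hβ, ← Algebra.smul_def]
  | add x y hx hy ihx ihy =>
      obtain ⟨cx, hcx⟩ := ihx; obtain ⟨cy, hcy⟩ := ihy
      exact ⟨cx + cy, by rw [mul_add, add_mul, hcx, hcy, add_smul]⟩
  | mul x y hx hy ihx ihy =>
      obtain ⟨cx, hcx⟩ := ihx; obtain ⟨cy, hcy⟩ := ihy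
      refine ⟨cx * cy, ?_⟩
      have h1 : e0 A β * (x * y) * e0 A β = (e0 A β * x * e0 A β) * (y * e0 A β) := by
        calc e0 A β * (x * y) * e0 A β = e0 A β * x * (y * e0 A β) := by
              simp only [mul_assoc]
          _ = e0 A β * x * (e0 A β * y) := by rw [e0_central A β hβ y hy]
          _ = e0 A β * x * (e0 A β * e0 A β * y) := by rw [e0_idem A β hβ]
          _ = (e0 A β * x * e0 A β) * (e0 A β * y) := by simp only [mul_assoc]
          _ = (e0 A β * x * e0 A β) * (y * e0 A β) := by rw [e0_central A β hβ y hy]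
      rw [h1, hcx, smul_mul_assoc, ← mul_assoc, hcy, smul_smul]


omit hβ in
lemma e0_ne_zero : e0 A β ≠ 0 := by
  intro h
  have h1 : A.basis.repr (e0 A β) 1 = ((Fintype.card ↥N : ℂ))⁻¹ * (((β 1)⁻¹ : ℂˣ) : ℂ) := by
    unfold e0 v
    have hb : ∀ n : ↥N, (A.u (n : G) : A.carrier) = A.basis (n : G) := fun n => (A.basis_eq _).symm
    simp only [hb]
    rw [map_smul, map_sum]
    simp only [map_smul, Module.Basis.repr_self]
    rw [Finsupp.smul_apply, Finsupp.finset_sum_apply]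
    congr 1
    rw [Fintype.sum_eq_single (1 : ↥N)]
    · simp [Finsupp.single_apply]
    · intro n hn
      have : ((n : G) ≠ (1 : G)) := by
        simpa [← Subtype.ext_iff] using hn
      simp [Finsupp.single_apply, this]
  rw [h] at h1
  simp only [map_zero, Finsupp.coe_zero, Pi.zero_apply] at h1
  have := mul_ne_zero (inv_ne_zero (cardN_ne_zero (N := N))) (Units.ne_zero ((β 1)⁻¹))
  exact this h1.symm

lemma u_conj (g n : G) :
    (A.u g : A.carrier) * (A.u n : A.carrier) * ↑(A.u g)⁻¹
      = ((α g n : ℂ) * ((α (g * n * g⁻¹) g : ℂ))⁻¹) • (A.u (g * n * g⁻¹) : A.carrier) := by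
  rw [Units.mul_inv_eq_iff_eq_mul, A.u_mul, smul_mul_assoc, A.u_mul]
  rw [inv_mul_cancel_right]
  rw [smul_smul, mul_assoc, inv_mul_cancel₀ (Units.ne_zero _), mul_one]

lemma u_conj' (g n : G) :
    ↑(A.u g)⁻¹ * (A.u n : A.carrier) * (A.u g : A.carrier)
      = ((α n g : ℂ) * ((α g (g⁻¹ * n * g) : ℂ))⁻¹) • (A.u (g⁻¹ * n * g) : A.carrier) := by
  rw [mul_assoc, Units.inv_mul_eq_iff_eq_mul, A.u_mul, mul_smul_comm, A.u_mul]
  rw [show g * (g⁻¹ * n * g) = n * g by group, smul_smul]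
  congr 1
  field_simp

variable [hN : N.Normal]

omit hβ [Fintype ↥N] in
lemma conj_mem_sub {g : G} : ∀ x ∈ A.sub N,
    (A.u g : A.carrier) * x * ↑(A.u g)⁻¹ ∈ A.sub N := by
  intro x hx
  induction hx using Algebra.adjoin_induction with
  | mem y hy =>
      obtain ⟨n, hn, rfl⟩ := hy
      show (A.u g : A.carrier) * (A.u n : A.carrier) * ↑(A.u g)⁻¹ ∈ A.sub N
      rw [u_conj]
      exact Subalgebra.smul_mem _ (u_mem A (hN.conj_mem n hn g)) _
  | algebraMap c =>
      have : (A.u g : A.carrier) * (algebraMap ℂ A.carrier c) * ↑(A.u g)⁻¹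
          = algebraMap ℂ A.carrier c := by
        rw [← Algebra.commutes, mul_assoc, Units.mul_inv, mul_one]
      rw [this]; exact Subalgebra.algebraMap_mem _ _
  | add x y hx hy ihx ihy =>
      have : (A.u g : A.carrier) * (x + y) * ↑(A.u g)⁻¹
          = (A.u g : A.carrier) * x * ↑(A.u g)⁻¹ + (A.u g : A.carrier) * y * ↑(A.u g)⁻¹ := by
        rw [mul_add, add_mul]
      rw [this]; exact add_mem ihx ihy
  | mul x y hx hy ihx ihy =>
      have : (A.u g : A.carrier) * (x * y) * ↑(A.u g)⁻¹
          = ((A.u g : A.carrier) * x * ↑(A.u g)⁻¹) * ((A.u g : A.carrier) * y * ↑(A.u g)⁻¹) := by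
        simp only [mul_assoc, Units.inv_mul_cancel_left]
      rw [this]; exact mul_mem ihx ihy

omit hβ [Fintype ↥N] in
lemma conj_mem_sub' {g : G} : ∀ x ∈ A.sub N,
    ↑(A.u g)⁻¹ * x * (A.u g : A.carrier) ∈ A.sub N := by
  intro x hx
  induction hx using Algebra.adjoin_induction with
  | mem y hy =>
      obtain ⟨n, hn, rfl⟩ := hy
      show ↑(A.u g)⁻¹ * (A.u n : A.carrier) * (A.u g : A.carrier) ∈ A.sub N
      rw [u_conj']
      have hmem : g⁻¹ * n * g ∈ N := by
        simpa using hN.conj_mem n hn g⁻¹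
      exact Subalgebra.smul_mem _ (u_mem A hmem) _
  | algebraMap c =>
      have : (↑(A.u g)⁻¹ : A.carrier) * (algebraMap ℂ A.carrier c) * (A.u g : A.carrier)
          = algebraMap ℂ A.carrier c := by
        rw [← Algebra.commutes, mul_assoc, Units.inv_mul, mul_one]
      rw [this]; exact Subalgebra.algebraMap_mem _ _
  | add x y hx hy ihx ihy =>
      have : (↑(A.u g)⁻¹ : A.carrier) * (x + y) * (A.u g : A.carrier)
          = ↑(A.u g)⁻¹ * x * (A.u g : A.carrier) + ↑(A.u g)⁻¹ * y * (A.u g : A.carrier) := by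
        rw [mul_add, add_mul]
      rw [this]; exact add_mem ihx ihy
  | mul x y hx hy ihx ihy =>
      have : (↑(A.u g)⁻¹ : A.carrier) * (x * y) * (A.u g : A.carrier)
          = (↑(A.u g)⁻¹ * x * (A.u g : A.carrier)) * (↑(A.u g)⁻¹ * y * (A.u g : A.carrier)) := by
        simp only [mul_assoc, Units.mul_inv_cancel_left]
      rw [this]; exact mul_mem ihx ihy


noncomputable def ee (g : G) : A.carrier :=
  (A.u g : A.carrier) * e0 A β * ↑(A.u g)⁻¹

omit hβ in
lemma e_mem (g : G) : ee A β g ∈ A.sub N :=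
  conj_mem_sub A _ (e0_mem A β)

include hβ in
omit hN in
lemma e_idem (g : G) : ee A β g * ee A β g = ee A β g := by
  have h : ∀ b : A.carrier, e0 A β * (e0 A β * b) = e0 A β * b := fun b => by
    rw [← mul_assoc, e0_idem A β hβ]
  unfold ee
  simp only [mul_assoc, Units.inv_mul_cancel_left, h]

omit hβ hN in
lemma e_ne_zero (g : G) : ee A β g ≠ 0 := by
  intro h
  have h2 : e0 A β = ↑(A.u g)⁻¹ * ee A β g * (A.u g : A.carrier) := by
    unfold ee
    simp only [mul_assoc, Units.mul_inv_cancel_left, Units.inv_mul_cancel_left, Units.inv_mul,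
      mul_one]
  rw [h, mul_zero, zero_mul] at h2
  exact e0_ne_zero A β h2

include hβ in
lemma e_central (g : G) : ∀ x ∈ A.sub N, ee A β g * x = x * ee A β g := by
  intro x hx
  have hx' := conj_mem_sub' A (g := g) x hx
  have h1 : ee A β g * x = (A.u g : A.carrier) *
      (e0 A β * (↑(A.u g)⁻¹ * x * (A.u g : A.carrier))) * ↑(A.u g)⁻¹ := by
    unfold ee
    simp only [mul_assoc, Units.mul_inv_cancel_left, Units.inv_mul_cancel_left, Units.mul_inv,
      Units.inv_mul, mul_one]
  have h2 : x * ee A β g = (A.u g : A.carrier) *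
      ((↑(A.u g)⁻¹ * x * (A.u g : A.carrier)) * e0 A β) * ↑(A.u g)⁻¹ := by
    unfold ee
    simp only [mul_assoc, Units.mul_inv_cancel_left, Units.inv_mul_cancel_left, Units.mul_inv,
      Units.inv_mul, mul_one]
  rw [h1, e0_central A β hβ _ hx', ← h2]

include hβ in
lemma e_scalar (g : G) : ∀ x ∈ A.sub N, ∃ c : ℂ, ee A β g * x * ee A β g = c • ee A β g := by
  intro x hx
  obtain ⟨c, hc⟩ := e0_scalar A β hβ _ (conj_mem_sub' A (g := g) x hx)
  refine ⟨c, ?_⟩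
  have h1 : ee A β g * x * ee A β g = (A.u g : A.carrier) *
      (e0 A β * (↑(A.u g)⁻¹ * x * (A.u g : A.carrier)) * e0 A β) * ↑(A.u g)⁻¹ := by
    unfold ee
    simp only [mul_assoc, Units.mul_inv_cancel_left, Units.inv_mul_cancel_left, Units.mul_inv,
      Units.inv_mul, mul_one]
  rw [h1, hc, mul_smul_comm, smul_mul_assoc]
  rfl

omit hβ hN in
lemma conj_e (h g : G) :
    (A.u h : A.carrier) * ee A β g * ↑(A.u h)⁻¹ = ee A β (h * g) := by
  have h1 : (A.u h : A.carrier) * A.u g = (α h g : ℂ) • (A.u (h * g) : A.carrier) := A.u_mul h g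
  have h2 : (A.u h : A.carrier) * A.u g * (((α h g : ℂ))⁻¹ • ↑(A.u (h * g))⁻¹) = 1 := by
    rw [h1, smul_mul_assoc, mul_smul_comm, smul_smul, Units.mul_inv,
      mul_inv_cancel₀ (Units.ne_zero _), one_smul]
  have hinv : (↑(A.u g)⁻¹ : A.carrier) * ↑(A.u h)⁻¹
      = ((α h g : ℂ))⁻¹ • ↑(A.u (h * g))⁻¹ := by
    calc (↑(A.u g)⁻¹ : A.carrier) * ↑(A.u h)⁻¹
        = ↑(A.u g)⁻¹ * ↑(A.u h)⁻¹ *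
            ((A.u h : A.carrier) * A.u g * (((α h g : ℂ))⁻¹ • ↑(A.u (h * g))⁻¹)) := by
          rw [h2, mul_one]
      _ = ((α h g : ℂ))⁻¹ • ↑(A.u (h * g))⁻¹ := by
          simp only [mul_assoc, Units.inv_mul_cancel_left]
  calc (A.u h : A.carrier) * ee A β g * ↑(A.u h)⁻¹
      = ((A.u h : A.carrier) * A.u g) * e0 A β * (↑(A.u g)⁻¹ * ↑(A.u h)⁻¹) := by
        unfold ee; simp only [mul_assoc]
    _ = ((α h g : ℂ) • (A.u (h * g) : A.carrier)) * e0 A β *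
          (((α h g : ℂ))⁻¹ • ↑(A.u (h * g))⁻¹) := by rw [h1, hinv]
    _ = ee A β (h * g) := by
        unfold ee
        rw [smul_mul_assoc, smul_mul_assoc, mul_smul_comm, smul_smul,
          mul_inv_cancel₀ (Units.ne_zero _), one_smul]

omit hβ hN in
lemma e_one : ee A β 1 = e0 A β := by
  have h1 : (A.u 1 : A.carrier) = ((α 1 1 : ℂˣ) : ℂ) • 1 := u_one_eq A
  have h3 : (A.u 1 : A.carrier) * (((α 1 1 : ℂ))⁻¹ • 1) = 1 := by
    rw [h1, smul_mul_assoc, one_mul, smul_smul, mul_inv_cancel₀ (Units.ne_zero _), one_smul]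
  have h2 : (↑(A.u 1)⁻¹ : A.carrier) = ((α 1 1 : ℂ))⁻¹ • 1 := by
    calc (↑(A.u 1)⁻¹ : A.carrier)
        = ↑(A.u 1)⁻¹ * ((A.u 1 : A.carrier) * (((α 1 1 : ℂ))⁻¹ • 1)) := by rw [h3, mul_one]
      _ = ((α 1 1 : ℂ))⁻¹ • 1 := by rw [← mul_assoc, Units.inv_mul, one_mul]
  unfold ee
  rw [h1, h2, smul_mul_assoc, one_mul, smul_mul_assoc, mul_smul_comm, mul_one, smul_smul,
    mul_inv_cancel₀ (Units.ne_zero _), one_smul]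


omit hβ hN in
lemma smul_cancel {a b : ℂ} {x : A.carrier} (hx : x ≠ 0) (h : a • x = b • x) : a = b := by
  have h1 : (a - b) • x = 0 := by rw [sub_smul, h, sub_self]
  rcases smul_eq_zero.mp h1 with h2 | h2
  · exact sub_eq_zero.mp h2
  · exact absurd h2 hx

include hβ in
lemma e_ortho (g g' : G) (hne : ee A β g ≠ ee A β g') : ee A β g * ee A β g' = 0 := by
  obtain ⟨c, hc⟩ := e_scalar A β hβ g _ (e_mem A β g')
  obtain ⟨c', hc'⟩ := e_scalar A β hβ g' _ (e_mem A β g)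
  have hswap : ee A β g' * ee A β g = ee A β g * ee A β g' :=
    e_central A β hβ g' _ (e_mem A β g)
  have hp : ee A β g * ee A β g' = c • ee A β g := by
    have h1 : ee A β g * ee A β g' * ee A β g = ee A β g * ee A β g' := by
      rw [mul_assoc, hswap, ← mul_assoc, e_idem A β hβ]
    rw [← h1, hc]
  have hp' : ee A β g * ee A β g' = c' • ee A β g' := by
    have h1 : ee A β g' * ee A β g * ee A β g' = ee A β g * ee A β g' := by
      rw [mul_assoc, ← hswap, ← mul_assoc, e_idem A β hβ]
    rw [← h1, hc']
  have hpp : (ee A β g * ee A β g') * (ee A β g * ee A β g') = ee A β g * ee A β g' := by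
    calc (ee A β g * ee A β g') * (ee A β g * ee A β g')
        = (ee A β g * ee A β g' * ee A β g) * ee A β g' := by simp only [mul_assoc]
      _ = (ee A β g * ee A β g') * ee A β g' := by rw [mul_assoc (ee A β g), hswap, ← mul_assoc, e_idem A β hβ]
      _ = ee A β g * (ee A β g' * ee A β g') := by rw [mul_assoc]
      _ = ee A β g * ee A β g' := by rw [e_idem A β hβ]
  have hcc : c * c = c := by
    have h2 : (c * c) • ee A β g = c • ee A β g := by
      calc (c * c) • ee A β g = (c • ee A β g) * (c • ee A β g) := by
            rw [smul_mul_assoc, mul_smul_comm, smul_smul, e_idem A β hβ]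
        _ = (ee A β g * ee A β g') * (ee A β g * ee A β g') := by rw [← hp]
        _ = ee A β g * ee A β g' := hpp
        _ = c • ee A β g := hp
    exact smul_cancel A (e_ne_zero A β g) h2
  have hcc' : c' * c' = c' := by
    have h2 : (c' * c') • ee A β g' = c' • ee A β g' := by
      calc (c' * c') • ee A β g' = (c' • ee A β g') * (c' • ee A β g') := by
            rw [smul_mul_assoc, mul_smul_comm, smul_smul, e_idem A β hβ]
        _ = (ee A β g * ee A β g') * (ee A β g * ee A β g') := by rw [← hp']
        _ = ee A β g * ee A β g' := hpp
        _ = c' • ee A β g' := hp'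
    exact smul_cancel A (e_ne_zero A β g') h2
  rcases mul_eq_zero.mp (show c * (c - 1) = 0 by linear_combination hcc) with h | h
  · rw [hp, h, zero_smul]
  · exfalso
    have hc1 : c = 1 := sub_eq_zero.mp h
    rcases mul_eq_zero.mp (show c' * (c' - 1) = 0 by linear_combination hcc') with h' | h'
    · exact e_ne_zero A β g (by rw [← one_smul ℂ (ee A β g), ← hc1, ← hp, hp', h', zero_smul])
    · have hc1' : c' = 1 := sub_eq_zero.mp h'
      exact hne (by rw [← one_smul ℂ (ee A β g), ← hc1, ← hp, hp', hc1', one_smul])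

end Stmt7Aux

open TwistedGroupAlgebra in
/-- If `ℂ^αG` is a simple ring and `N ⊴ G` is isotropic (the
restriction of the class of `α` to `N` is trivial), then every simple `ℂ^αN`-module is
1-dimensional and `N` is abelian. -/
theorem stmt7 {G : Type} [Group G] [Fintype G] (α : G → G → ℂˣ) (hα : IsTwoCocycle α)
    (A : TwistedGroupAlgebra G α) (hA : IsSimpleRing A.carrier)
    (N : Subgroup G) [N.Normal]
    (htriv : ∃ β : N → ℂˣ, ∀ n n' : N, α n n' = β n * β n' * (β (n * n'))⁻¹) :
    (∀ (M : Type) [AddCommGroup M] [Module (A.sub N) M],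
      IsSimpleModule (A.sub N) M → dimC A N M = 1) ∧
    ∀ x ∈ N, ∀ y ∈ N, x * y = y * x := by
  classical
  obtain ⟨β, hβ⟩ := htriv
  haveI : Fintype ↥N := Fintype.ofFinite _
  set S : Finset A.carrier := Finset.image (Stmt7Aux.ee A β) Finset.univ with hSdef
  set f : A.carrier := ∑ x ∈ S, x with hfdef
  have hSmem : ∀ x ∈ S, x ∈ A.sub N := by
    intro x hx
    obtain ⟨g, -, rfl⟩ := Finset.mem_image.mp hx
    exact Stmt7Aux.e_mem A β g
  have hSe0 : Stmt7Aux.e0 A β ∈ S :=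
    Finset.mem_image.mpr ⟨1, Finset.mem_univ _, Stmt7Aux.e_one A β⟩
  have hfe0 : f * Stmt7Aux.e0 A β = Stmt7Aux.e0 A β := by
    rw [hfdef, Finset.sum_mul]
    rw [Finset.sum_eq_single_of_mem _ hSe0 (fun x hx hne => ?_)]
    · exact Stmt7Aux.e0_idem A β hβ
    · obtain ⟨g, -, rfl⟩ := Finset.mem_image.mp hx
      rw [← Stmt7Aux.e_one A β]
      exact Stmt7Aux.e_ortho A β hβ g 1 (by rw [Stmt7Aux.e_one A β]; exact hne)
  -- conjugation permutes S, so f is central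
  have hub : ∀ g : G, (A.u g : A.carrier) * f = f * (A.u g : A.carrier) := by
    intro g
    have hinj : ∀ x ∈ S, ∀ y ∈ S,
        (A.u g : A.carrier) * x * ↑(A.u g)⁻¹ = (A.u g : A.carrier) * y * ↑(A.u g)⁻¹ →
          x = y := by
      intro x _ y _ h
      have h2 := congrArg (fun z => (↑(A.u g)⁻¹ : A.carrier) * z * (A.u g : A.carrier)) h
      simpa only [mul_assoc, Units.inv_mul_cancel_left, Units.inv_mul, mul_one] using h2
    have himg : Finset.image (fun x => (A.u g : A.carrier) * x * ↑(A.u g)⁻¹) S = S := by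
      rw [hSdef, Finset.image_image]
      have hfun : ((fun x => (A.u g : A.carrier) * x * ↑(A.u g)⁻¹) ∘ Stmt7Aux.ee A β)
          = (Stmt7Aux.ee A β) ∘ (fun g' => g * g') :=
        funext fun g' => Stmt7Aux.conj_e A β g g'
      rw [hfun, ← Finset.image_image,
        Finset.image_univ_of_surjective (fun y => ⟨g⁻¹ * y, by group⟩)]
    have hsum : ∑ x ∈ S, (A.u g : A.carrier) * x * ↑(A.u g)⁻¹ = f := by
      calc ∑ x ∈ S, (A.u g : A.carrier) * x * ↑(A.u g)⁻¹
          = ∑ y ∈ Finset.image (fun x => (A.u g : A.carrier) * x * ↑(A.u g)⁻¹) S, y :=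
            (Finset.sum_image (f := fun y => y) hinj).symm
        _ = f := by rw [himg, hfdef]
    have h3 : (A.u g : A.carrier) * f
        = (∑ x ∈ S, (A.u g : A.carrier) * x * ↑(A.u g)⁻¹) * (A.u g : A.carrier) := by
      rw [hfdef, Finset.mul_sum, Finset.sum_mul]
      refine Finset.sum_congr rfl fun x hx => ?_
      simp only [mul_assoc, Units.inv_mul, mul_one]
    rw [h3, hsum]
  have hcent : ∀ y : A.carrier, f * y = y * f := by
    have hL : LinearMap.mulRight ℂ f = LinearMap.mulLeft ℂ f := by
      apply A.basis.ext
      intro g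
      simp only [LinearMap.mulRight_apply, LinearMap.mulLeft_apply, A.basis_eq]
      exact hub g
    intro y
    exact (LinearMap.congr_fun hL y).symm
  -- f = 1 by simplicity
  have hf1 : f = 1 := by
    let I : TwoSidedIdeal A.carrier := TwoSidedIdeal.mk' {x | x * f = x}
      (by simp)
      (fun {x y} hx hy => by
        simp only [Set.mem_setOf_eq] at *; rw [add_mul, hx, hy])
      (fun {x} hx => by
        simp only [Set.mem_setOf_eq] at *; rw [neg_mul, hx])
      (fun {x y} hy => by
        simp only [Set.mem_setOf_eq] at *; rw [mul_assoc, hy])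
      (fun {x y} hx => by
        simp only [Set.mem_setOf_eq] at *; rw [mul_assoc, ← hcent y, ← mul_assoc, hx])
    have he0I : Stmt7Aux.e0 A β ∈ I := by
      simp only [I, TwoSidedIdeal.mem_mk', Set.mem_setOf_eq]
      rw [← hcent, hfe0]
    haveI := hA.simple
    rcases eq_bot_or_eq_top I with hbot | htop
    · exfalso
      rw [hbot, TwoSidedIdeal.mem_bot] at he0I
      exact Stmt7Aux.e0_ne_zero A β he0I
    · have h1 : (1 : A.carrier) ∈ I := by rw [htop]; exact TwoSidedIdeal.mem_top _
      simp only [I, TwoSidedIdeal.mem_mk', Set.mem_setOf_eq, one_mul] at h1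
      exact h1
  -- multiplication against an orbit idempotent is scalar
  have hxs : ∀ g : G, ∀ x ∈ A.sub N, ∃ c : ℂ, x * Stmt7Aux.ee A β g = c • Stmt7Aux.ee A β g := by
    intro g x hx
    obtain ⟨c, hc⟩ := Stmt7Aux.e_scalar A β hβ g x hx
    refine ⟨c, ?_⟩
    calc x * Stmt7Aux.ee A β g
        = x * (Stmt7Aux.ee A β g * Stmt7Aux.ee A β g) := by rw [Stmt7Aux.e_idem A β hβ]
      _ = (x * Stmt7Aux.ee A β g) * Stmt7Aux.ee A β g := by rw [mul_assoc]
      _ = (Stmt7Aux.ee A β g * x) * Stmt7Aux.ee A β g := by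
          rw [Stmt7Aux.e_central A β hβ g x hx]
      _ = c • Stmt7Aux.ee A β g := hc
  -- the subalgebra is commutative
  have hsubcomm : ∀ x ∈ A.sub N, ∀ y ∈ A.sub N, x * y = y * x := by
    intro x hx y hy
    have key : ∀ s ∈ S, x * s * y = y * s * x := by
      intro s hs
      obtain ⟨g, -, rfl⟩ := Finset.mem_image.mp hs
      obtain ⟨cx, hcx⟩ := hxs g x hx
      obtain ⟨cy, hcy⟩ := hxs g y hy
      have h1 : x * Stmt7Aux.ee A β g * y = (cx * cy) • Stmt7Aux.ee A β g := by
        calc x * Stmt7Aux.ee A β g * y = cx • (Stmt7Aux.ee A β g * y) := by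
              rw [hcx, smul_mul_assoc]
          _ = cx • (y * Stmt7Aux.ee A β g) := by rw [Stmt7Aux.e_central A β hβ g y hy]
          _ = (cx * cy) • Stmt7Aux.ee A β g := by rw [hcy, smul_smul]
      have h2 : y * Stmt7Aux.ee A β g * x = (cy * cx) • Stmt7Aux.ee A β g := by
        calc y * Stmt7Aux.ee A β g * x = cy • (Stmt7Aux.ee A β g * x) := by
              rw [hcy, smul_mul_assoc]
          _ = cy • (x * Stmt7Aux.ee A β g) := by rw [Stmt7Aux.e_central A β hβ g x hx]
          _ = (cy * cx) • Stmt7Aux.ee A β g := by rw [hcx, smul_smul]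
      rw [h1, h2, mul_comm cx cy]
    calc x * y = x * f * y := by rw [hf1, mul_one]
      _ = ∑ s ∈ S, x * s * y := by rw [hfdef, Finset.mul_sum, Finset.sum_mul]
      _ = ∑ s ∈ S, y * s * x := Finset.sum_congr rfl key
      _ = y * f * x := by rw [hfdef, Finset.mul_sum, Finset.sum_mul]
      _ = y * x := by rw [hf1, mul_one]
  -- N is abelian
  have habelian : ∀ x ∈ N, ∀ y ∈ N, x * y = y * x := by
    intro x hx y hy
    have h1 := hsubcomm _ (Stmt7Aux.u_mem A hx) _ (Stmt7Aux.u_mem A hy)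
    rw [A.u_mul, A.u_mul] at h1
    by_contra hne
    have h2 := congrArg (fun z => (A.basis.repr z) (x * y)) h1
    simp only [← A.basis_eq, map_smul, Module.Basis.repr_self, Finsupp.smul_apply,
      Finsupp.single_apply, smul_eq_mul] at h2
    rw [if_pos trivial, if_neg (fun hh => hne hh.symm), mul_one, mul_zero] at h2
    exact Units.ne_zero (α x y) h2
  refine ⟨?_, habelian⟩
  -- simple modules are 1-dimensional
  intro M _ _ hM
  haveI := hM
  haveI : Nontrivial M := IsSimpleModule.nontrivial (A.sub N) M
  obtain ⟨m0, hm0⟩ := exists_ne (0 : M)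
  have hval : (A.sub N).val (∑ x ∈ S.attach, (⟨x.1, hSmem x.1 x.2⟩ : A.sub N)) = f := by
    rw [map_sum]
    calc ∑ x ∈ S.attach, (A.sub N).val ⟨x.1, hSmem x.1 x.2⟩
        = ∑ x ∈ S.attach, (x.1 : A.carrier) := rfl
      _ = ∑ x ∈ S, x := Finset.sum_attach S (fun x => x)
      _ = f := hfdef.symm
  have hsum1 : (∑ x ∈ S.attach, (⟨x.1, hSmem x.1 x.2⟩ : A.sub N)) = 1 :=
    Subtype.ext (hval.trans hf1)
  have hexists : ∃ x : {x // x ∈ S}, (⟨x.1, hSmem x.1 x.2⟩ : A.sub N) • m0 ≠ 0 := by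
    by_contra hall
    push_neg at hall
    apply hm0
    calc m0 = (1 : A.sub N) • m0 := (one_smul _ _).symm
      _ = (∑ x ∈ S.attach, (⟨x.1, hSmem x.1 x.2⟩ : A.sub N)) • m0 := by rw [hsum1]
      _ = ∑ x ∈ S.attach, (⟨x.1, hSmem x.1 x.2⟩ : A.sub N) • m0 := Finset.sum_smul
      _ = 0 := Finset.sum_eq_zero fun x _ => hall x
  obtain ⟨⟨s, hsS⟩, hsm⟩ := hexists
  obtain ⟨g, -, rfl⟩ := Finset.mem_image.mp hsS
  set r : A.sub N := ⟨Stmt7Aux.ee A β g, hSmem _ hsS⟩ with hrdef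
  set m1 : M := r • m0 with hm1def
  have hm1ne : m1 ≠ 0 := hsm
  have hkey : ∀ a : A.sub N, ∃ c : ℂ, a * r = algebraMap ℂ (A.sub N) c * r := by
    intro a
    obtain ⟨c, hc⟩ := hxs g a.1 a.2
    refine ⟨c, Subtype.ext ?_⟩
    show (a : A.carrier) * Stmt7Aux.ee A β g
      = ((algebraMap ℂ (A.sub N) c : A.sub N) : A.carrier) * Stmt7Aux.ee A β g
    rw [Subalgebra.coe_algebraMap, ← Algebra.smul_def]
    exact hc
  have hact : ∀ a : A.sub N, ∃ c : ℂ, a • m1 = algebraMap ℂ (A.sub N) c • m1 := by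
    intro a
    obtain ⟨c, hc⟩ := hkey a
    exact ⟨c, by rw [hm1def, ← mul_smul, hc, mul_smul]⟩
  let P : Submodule (A.sub N) M :=
    { carrier := Set.range (fun c : ℂ => algebraMap ℂ (A.sub N) c • m1)
      add_mem' := by
        rintro _ _ ⟨c, rfl⟩ ⟨d, rfl⟩
        refine ⟨c + d, ?_⟩
        show algebraMap ℂ (A.sub N) (c + d) • m1
          = algebraMap ℂ (A.sub N) c • m1 + algebraMap ℂ (A.sub N) d • m1
        rw [map_add, add_smul]
      zero_mem' := ⟨0, by
        show algebraMap ℂ (A.sub N) (0 : ℂ) • m1 = 0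
        rw [map_zero, zero_smul]⟩
      smul_mem' := by
        rintro a _ ⟨c, rfl⟩
        obtain ⟨d, hd⟩ := hact a
        refine ⟨c * d, ?_⟩
        show algebraMap ℂ (A.sub N) (c * d) • m1 = a • algebraMap ℂ (A.sub N) c • m1
        calc algebraMap ℂ (A.sub N) (c * d) • m1
            = algebraMap ℂ (A.sub N) c • (algebraMap ℂ (A.sub N) d • m1) := by
              rw [map_mul, mul_smul]
          _ = algebraMap ℂ (A.sub N) c • (a • m1) := by rw [hd]
          _ = (algebraMap ℂ (A.sub N) c * a) • m1 := by rw [mul_smul]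
          _ = (a * algebraMap ℂ (A.sub N) c) • m1 := by rw [Algebra.commutes]
          _ = a • algebraMap ℂ (A.sub N) c • m1 := by rw [mul_smul] }
  have hm1P : m1 ∈ P := ⟨1, by
    show algebraMap ℂ (A.sub N) (1 : ℂ) • m1 = m1
    rw [map_one, one_smul]⟩
  have hP : P = ⊤ := by
    rcases eq_bot_or_eq_top P with h | h
    · exfalso
      apply hm1ne
      rw [h] at hm1P
      simpa using hm1P
    · exact h
  show Module.finrank ℂ (RestrictScalars ℂ (A.sub N) M) = 1
  set E := RestrictScalars.addEquiv ℂ (A.sub N) M with hEdef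
  letI : @Module ℂ (RestrictScalars ℂ (A.sub N) M) _ AddCommGroup.toAddCommMonoid :=
    RestrictScalars.module ℂ (A.sub N) M
  refine @finrank_eq_one ℂ _ _ _ _ _
    (@DivisionSemiring.to_moduleIsTorsionFree ℂ _ _ AddCommGroup.toAddCommMonoid _) _
    (E.symm m1) ?_ ?_
  · intro h
    exact hm1ne ((AddEquiv.map_eq_zero_iff E.symm).mp h)
  · intro w
    have hw : E w ∈ P := hP ▸ Submodule.mem_top
    obtain ⟨c, hc⟩ := hw
    refine ⟨c, E.injective ?_⟩
    calc E (c • E.symm m1) = algebraMap ℂ (A.sub N) c • E (E.symm m1) :=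
          RestrictScalars.addEquiv_map_smul ℂ (A.sub N) M c (E.symm m1)
      _ = algebraMap ℂ (A.sub N) c • m1 := by rw [AddEquiv.apply_symm_apply]
      _ = E w := hc
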